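/- Let N : ℕ be positive and let c : ZMod N → ℝ be an even function, i.e. c d = c (-d) for all d : ZMod N. Define the circulant coupling matrix A : Matrix (Fin N) (Fin N) ℝ by A i j = c ((j : ZMod N) - (i : ZMod N)), and for an integer p define the twisted state ψ : Fin N → ℝ by ψ i = -(2 * Real.pi * p * i) / N. Then ψ is an equilibrium of the Kuramoto system on A: for every i : Fin N, ∑ j, A i j * Real.sin (ψ j - ψ i) = 0. -/

import Mathlib

theorem twisted_state_is_equilibrium_of_circulant
    (N : ℕ) (hN : 0 < N)
    (c : ZMod N → ℝ) (hc : ∀ d : ZMod N, c d = c (-d))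
    (A : Matrix (Fin N) (Fin N) ℝ)
    (hA : ∀ i j : Fin N, A i j = c ((j : ZMod N) - (i : ZMod N)))
    (p : ℤ) (ψ : Fin N → ℝ)
    (hψ : ∀ i : Fin N, ψ i = -(2 * Real.pi * (p : ℝ) * (i : ℝ)) / N) :
    ∀ i : Fin N, ∑ j, A i j * Real.sin (ψ j - ψ i) = 0 := by
  haveI : NeZero N := ⟨hN.ne'⟩
  have hNR : (N : ℝ) ≠ 0 := Nat.cast_ne_zero.mpr hN.ne'
  intro i
  set f : ZMod N → ℝ := fun d => Real.sin (2 * Real.pi * p * d.val / N) with hf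
  -- f is odd
  have hodd : ∀ d : ZMod N, f (-d) = - f d := by
    intro d
    by_cases h0 : d = 0
    · simp [h0, hf]
    · have hvlt : d.val < N := ZMod.val_lt d
      have hv : (((-d).val : ℕ) : ℝ) = (N : ℝ) - (d.val : ℝ) := by
        rw [ZMod.neg_val, if_neg h0]
        push_cast [Nat.cast_sub hvlt.le]
        ring
      have : 2 * Real.pi * p * ((-d).val : ℝ) / N
          = -(2 * Real.pi * p * d.val / N) + (p : ℤ) * (2 * Real.pi) := by
        rw [hv]; field_simp; ring
      simp only [hf, this, Real.sin_add_int_mul_two_pi, Real.sin_neg]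
  -- sin of the phase difference equals -f of the ZMod difference
  have hsin : ∀ j : Fin N, Real.sin (ψ j - ψ i) = - f ((j : ZMod N) - (i : ZMod N)) := by
    intro j
    set d : ZMod N := (j : ZMod N) - (i : ZMod N) with hd
    have hcong : ((d.val : ℤ) : ZMod N) = (((j.val : ℤ) - (i.val : ℤ)) : ℤ) := by
      push_cast
      simp [hd, ZMod.natCast_val]
    rw [ZMod.intCast_eq_intCast_iff] at hcong
    obtain ⟨k, hk⟩ := hcong.dvd
    -- hk : (j.val : ℤ) - (i.val : ℤ) - d.val = N * k
    have hval : ((d.val : ℕ) : ℝ) = (j.val : ℝ) - (i.val : ℝ) - (N : ℝ) * (k : ℝ) := by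
      have := hk
      have h2 : ((j.val : ℤ) - (i.val : ℤ)) - (d.val : ℤ) = N * k := hk
      have := congrArg (fun z : ℤ => (z : ℝ)) h2
      push_cast at this
      linarith
    have harg : ψ j - ψ i = -(2 * Real.pi * p * (d.val : ℝ) / N) + (-(p * k) : ℤ) * (2 * Real.pi) := by
      rw [hψ j, hψ i, hval]
      field_simp
      push_cast
      ring
    rw [harg, Real.sin_add_int_mul_two_pi, Real.sin_neg, hf]
  -- rewrite the sum
  have hbij : Function.Bijective (fun j : Fin N => (j : ZMod N) - (i : ZMod N)) := by
    rw [Fintype.bijective_iff_injective_and_card]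
    constructor
    · intro a b hab
      have : (a : ZMod N) = (b : ZMod N) := by
        have := sub_left_injective.eq_iff.mp hab
        simpa using this
      have := congrArg ZMod.val this
      rwa [ZMod.val_cast_of_lt a.isLt, ZMod.val_cast_of_lt b.isLt, Fin.val_inj] at this
    · simp [ZMod.card]
  have hsum : ∑ j, A i j * Real.sin (ψ j - ψ i)
      = ∑ d : ZMod N, c d * (- f d) := by
    rw [← Function.Bijective.sum_comp hbij (fun d => c d * (- f d))]
    refine Finset.sum_congr rfl fun j _ => ?_
    rw [hA i j, hsin j]
  rw [hsum]
  -- pairing d ↦ -d shows the sum is zero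
  have hneg : ∑ d : ZMod N, c d * (- f d) = ∑ d : ZMod N, c (-d) * (- f (-d)) :=
    (Function.Bijective.sum_comp (neg_involutive.bijective) (fun d => c d * (- f d))).symm
  have hS : ∑ d : ZMod N, c d * (- f d) = - ∑ d : ZMod N, c d * (- f d) := by
    nth_rewrite 1 [hneg]
    rw [← Finset.sum_neg_distrib]
    refine Finset.sum_congr rfl fun d _ => ?_
    rw [← hc d, hodd d]
    ring
  linarith
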